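/- Let 0 < M < 1 and define ω = (1/(2√M)) · ln((1+√M)/(1-√M)). Then ω > 0 and the denominator √M + 1 - (1-√M)e^{2√M t} of z(t) = √M · (√M + 1 + (1-√M)e^{2√M t}) / (√M + 1 - (1-√M)e^{2√M t}) is strictly positive for t ∈ [0, ω) and vanishes at t = ω; consequently z(t) → +∞ as t → ω⁻. -/
import Mathlib


/-- For `0 < M < 1`, the blow-up time `ω` is positive, the denominator of `z` is positive
on `[0, ω)`, vanishes at `ω`, and `z` blows up to `+∞` as `t → ω⁻`. -/
theorem stmt1 (M : ℝ) (hM0 : 0 < M) (hM1 : M < 1)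
    (ω : ℝ) (hω : ω = 1 / (2 * Real.sqrt M) * Real.log ((1 + Real.sqrt M) / (1 - Real.sqrt M)))
    (den z : ℝ → ℝ)
    (hden : ∀ t, den t = Real.sqrt M + 1 - (1 - Real.sqrt M) * Real.exp (2 * Real.sqrt M * t))
    (hz : ∀ t, z t = Real.sqrt M *
      (Real.sqrt M + 1 + (1 - Real.sqrt M) * Real.exp (2 * Real.sqrt M * t)) / den t) :
    0 < ω ∧ (∀ t ∈ Set.Ico (0:ℝ) ω, 0 < den t) ∧ den ω = 0 ∧
      Filter.Tendsto z (nhdsWithin ω (Set.Iio ω)) Filter.atTop := by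
  set s := Real.sqrt M with hsdef
  have hs : 0 < s := Real.sqrt_pos.mpr hM0
  have hs1 : s < 1 := by
    have := Real.sqrt_lt_sqrt hM0.le hM1
    simpa using this
  have h1s : 0 < 1 - s := by linarith
  have hratio : 1 < (1 + s) / (1 - s) := by
    rw [lt_div_iff₀ h1s]; linarith
  have hlog : 0 < Real.log ((1 + s) / (1 - s)) := Real.log_pos hratio
  have hω0 : 0 < ω := by rw [hω]; positivity
  have hexp : 2 * s * ω = Real.log ((1 + s) / (1 - s)) := by
    rw [hω]; field_simp
  have hexpω : Real.exp (2 * s * ω) = (1 + s) / (1 - s) := by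
    rw [hexp, Real.exp_log (by positivity)]
  have hcancel : (1 - s) * ((1 + s) / (1 - s)) = 1 + s := by field_simp
  have hdenω : den ω = 0 := by
    rw [hden, hexpω, hcancel]; ring
  have hpos : ∀ t < ω, 0 < den t := by
    intro t ht
    rw [hden]
    have h2 : Real.exp (2 * s * t) < Real.exp (2 * s * ω) :=
      Real.exp_lt_exp.mpr (by nlinarith)
    have h3 : (1 - s) * Real.exp (2 * s * t) < (1 - s) * ((1 + s) / (1 - s)) :=
      by rw [← hexpω]; exact mul_lt_mul_of_pos_left h2 h1s
    linarith [hcancel ▸ h3]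
  refine ⟨hω0, fun t ht => hpos t ht.2, hdenω, ?_⟩
  -- denominator tends to 0
  have hd0 : Filter.Tendsto den (nhds ω) (nhds 0) := by
    have hc : Continuous fun t => s + 1 - (1 - s) * Real.exp (2 * s * t) := by continuity
    have h := hc.tendsto ω
    have hval : s + 1 - (1 - s) * Real.exp (2 * s * ω) = 0 := by
      rw [← hden ω]; exact hdenω
    rw [hval] at h
    exact h.congr (fun t => (hden t).symm)
  have hdW : Filter.Tendsto den (nhdsWithin ω (Set.Iio ω)) (nhdsWithin 0 (Set.Ioi 0)) := by
    rw [tendsto_nhdsWithin_iff]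
    exact ⟨hd0.mono_left nhdsWithin_le_nhds,
      eventually_nhdsWithin_of_forall (fun t ht => hpos t ht)⟩
  have hinv : Filter.Tendsto (fun t => (den t)⁻¹) (nhdsWithin ω (Set.Iio ω)) Filter.atTop :=
    tendsto_inv_nhdsGT_zero.comp hdW
  -- numerator tends to a positive limit
  have hnc : Continuous fun t => s * (s + 1 + (1 - s) * Real.exp (2 * s * t)) := by continuity
  have hn : Filter.Tendsto (fun t => s * (s + 1 + (1 - s) * Real.exp (2 * s * t)))
      (nhdsWithin ω (Set.Iio ω)) (nhds (s * (s + 1 + (1 + s)))) := by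
    have h := (hnc.tendsto ω).mono_left (nhdsWithin_le_nhds (s := Set.Iio ω))
    rwa [hexpω, hcancel] at h
  have hlim : 0 < s * (s + 1 + (1 + s)) := by nlinarith
  have hmul := Filter.Tendsto.pos_mul_atTop hlim hn hinv
  refine hmul.congr (fun t => ?_)
  rw [hz t, div_eq_mul_inv]
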